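/- The double integral ∬_{[0,1]^2} (1−x)/((1−xy)·ln(xy)) dx dy converges and equals −γ; equivalently, γ = −∬_{[0,1]^2} (1−x)/((1−xy)·ln(xy)) dx dy, where γ is Euler's constant. -/

import Mathlib

open MeasureTheory Real Set Filter Topology

namespace Stmt5Aux

lemma exp_Ioi (b : ℝ) (hb : b < 0) : ∫ t in Ioi (0:ℝ), Real.exp (b*t) = 1/(-b) := by
  have h : ∀ x ∈ Ici (0:ℝ), HasDerivAt (fun t => Real.exp (b*t)/b) (Real.exp (b*x)) x := by
    intro x _
    have := ((Real.hasDerivAt_exp (b*x)).comp x ((hasDerivAt_id x).const_mul b))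
    simpa [mul_comm, mul_div_assoc, mul_div_cancel_left₀ _ hb.ne] using this.div_const b
  have hlim : Tendsto (fun t => Real.exp (b*t)/b) atTop (𝓝 0) := by
    have : Tendsto (fun t : ℝ => b*t) atTop atBot := tendsto_id.const_mul_atTop_of_neg hb
    simpa using ((Real.tendsto_exp_atBot.comp this).div_const b)
  have := integral_Ioi_of_hasDerivAt_of_nonneg' h (fun x _ => (Real.exp_pos _).le) hlim
  rw [this]; simp [div_neg]

lemma exp_integrableOn (b : ℝ) (hb : b < 0) :
    IntegrableOn (fun t : ℝ => Real.exp (b*t)) (Ioi 0) := by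
  have := exp_neg_integrableOn_Ioi 0 (neg_pos.2 hb)
  simpa using this

lemma lint_t {u : ℝ} (c : ℝ) (hu : u ∈ Ioo (0:ℝ) 1) (hc : 0 ≤ c) (s0 : ℝ) :
    ∫⁻ t in Ioi (0:ℝ), ENNReal.ofReal (c * u ^ (s0 + t)) =
      ENNReal.ofReal (c * u ^ s0 / (-Real.log u)) := by
  have hlu : Real.log u < 0 := Real.log_neg hu.1 hu.2
  have hrw : ∀ t : ℝ, c * u ^ (s0 + t) = (c * u ^ s0) * Real.exp (Real.log u * t) := by
    intro t
    rw [Real.rpow_add hu.1, Real.rpow_def_of_pos hu.1 t]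
    ring
  simp_rw [hrw]
  rw [← ofReal_integral_eq_lintegral_ofReal
    (((exp_integrableOn _ hlu).const_mul _))
    (ae_of_all _ fun t => mul_nonneg (mul_nonneg hc (Real.rpow_nonneg hu.1.le _))
      (Real.exp_pos _).le)]
  rw [integral_const_mul, exp_Ioi _ hlu]
  ring_nf

lemma integrableOn_rpow (s : ℝ) (hs : 0 ≤ s) :
    IntegrableOn (fun x : ℝ => x ^ s) (Ioo 0 1) := by
  exact ((intervalIntegral.intervalIntegrable_rpow (μ := volume) (a := 0) (b := 1)
    (Or.inl hs)).1).mono_set Ioo_subset_Ioc_self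

lemma integral_rpow_Ioo (s : ℝ) (hs : 0 ≤ s) :
    ∫ x in Ioo (0:ℝ) 1, x ^ s = 1/(s+1) := by
  rw [← integral_Ioc_eq_integral_Ioo, ← intervalIntegral.integral_of_le zero_le_one,
    integral_rpow (Or.inl (by linarith))]
  rw [Real.one_rpow, Real.zero_rpow (by linarith)]
  ring

lemma lint_pow (s : ℝ) (hs : 0 ≤ s) :
    ∫⁻ y in Ioo (0:ℝ) 1, ENNReal.ofReal (y ^ s) = ENNReal.ofReal (1/(s+1)) := by
  rw [← ofReal_integral_eq_lintegral_ofReal (integrableOn_rpow s hs)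
    ((ae_restrict_iff' measurableSet_Ioo).2 (ae_of_all _ fun x hx =>
      Real.rpow_nonneg hx.1.le s)), integral_rpow_Ioo s hs]

lemma integrableOn_sub_rpow (s : ℝ) (hs : 0 ≤ s) :
    IntegrableOn (fun x : ℝ => (1-x) * x ^ s) (Ioo 0 1) := by
  have : IntegrableOn (fun x : ℝ => x ^ s - x ^ (s+1)) (Ioo 0 1) :=
    (integrableOn_rpow s hs).sub (integrableOn_rpow (s+1) (by linarith))
  refine this.congr_fun (fun x hx => ?_) measurableSet_Ioo
  show x ^ s - x ^ (s+1) = (1 - x) * x ^ s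
  rw [Real.rpow_add_one hx.1.ne']; ring

lemma integral_sub_rpow (s : ℝ) (hs : 0 ≤ s) :
    ∫ x in Ioo (0:ℝ) 1, (1-x) * x ^ s = 1/(s+1) - 1/(s+2) := by
  rw [setIntegral_congr_fun measurableSet_Ioo
    (g := fun x : ℝ => x ^ s - x ^ (s+1)) (fun x hx => by
      show _ = x ^ s - x ^ (s+1); rw [Real.rpow_add_one hx.1.ne']; ring),
    integral_sub (integrableOn_rpow s hs) (integrableOn_rpow (s+1) (by linarith)),
    integral_rpow_Ioo s hs, integral_rpow_Ioo (s+1) (by linarith)]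
  ring_nf

lemma lint_sub_pow (s : ℝ) (hs : 0 ≤ s) :
    ∫⁻ x in Ioo (0:ℝ) 1, ENNReal.ofReal ((1-x) * x ^ s) =
      ENNReal.ofReal (1/(s+1) - 1/(s+2)) := by
  rw [← ofReal_integral_eq_lintegral_ofReal (integrableOn_sub_rpow s hs)
    ((ae_restrict_iff' measurableSet_Ioo).2 (ae_of_all _ fun x hx =>
      mul_nonneg (by linarith [hx.2]) (Real.rpow_nonneg hx.1.le s))),
    integral_sub_rpow s hs]

noncomputable def T (n : ℕ) : ℝ :=
  1/((n:ℝ)+1) - (Real.log ((n:ℝ)+2) - Real.log ((n:ℝ)+1))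

lemma T_nonneg (n : ℕ) : 0 ≤ T n := by
  have h1 : (0:ℝ) < (n:ℝ)+1 := by positivity
  have h2 : (0:ℝ) < ((n:ℝ)+2)/((n:ℝ)+1) := by positivity
  have := Real.log_le_sub_one_of_pos h2
  rw [Real.log_div (by positivity) (by positivity)] at this
  have : Real.log ((n:ℝ)+2) - Real.log ((n:ℝ)+1) ≤ 1/((n:ℝ)+1) := by
    have he : ((n:ℝ)+2)/((n:ℝ)+1) - 1 = 1/((n:ℝ)+1) := by field_simp; norm_num
    linarith [he ▸ this]
  unfold T; linarith

lemma hasSum_T : HasSum T Real.eulerMascheroniConstant := by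
  rw [hasSum_iff_tendsto_nat_of_nonneg T_nonneg]
  have key : ∀ N : ℕ, ∑ n ∈ Finset.range N, T n = (harmonic N : ℝ) - Real.log (N+1) := by
    intro N
    have h1 : ∑ n ∈ Finset.range N, (1/((n:ℝ)+1)) = (harmonic N : ℝ) := by
      rw [harmonic]
      push_cast
      simp [one_div]
    have h2 : ∑ n ∈ Finset.range N,
        (Real.log ((n:ℝ)+2) - Real.log ((n:ℝ)+1)) = Real.log (N+1) := by
      have := Finset.sum_range_sub (f := fun i : ℕ => Real.log ((i:ℝ)+1)) N
      simp only [Nat.cast_zero, zero_add, Real.log_one, sub_zero] at this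
      rw [← this]
      apply Finset.sum_congr rfl
      intro i _
      push_cast
      ring_nf
    unfold T
    rw [Finset.sum_sub_distrib, h1, h2]
  simp_rw [key]
  exact Real.tendsto_harmonic_sub_log_add_one

noncomputable def FF (n : ℕ) (t : ℝ) : ℝ :=
  -((n:ℝ)+t+1)⁻¹ + (Real.log ((n:ℝ)+t+2) - Real.log ((n:ℝ)+t+1))

lemma FF_hasDeriv (n : ℕ) (x : ℝ) (hx : x ∈ Ici (0:ℝ)) :
    HasDerivAt (FF n) ((1/((n:ℝ)+x+1) - 1/((n:ℝ)+x+2)) * (1/((n:ℝ)+x+1))) x := by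
  have hs1 : (0:ℝ) < (n:ℝ)+x+1 := by have := hx.out; positivity
  have hs2 : (0:ℝ) < (n:ℝ)+x+2 := by have := hx.out; positivity
  have hA : HasDerivAt (fun t : ℝ => (n:ℝ)+t+1) 1 x := by
    simpa using ((hasDerivAt_id x).const_add ((n:ℝ))).add_const 1
  have hB : HasDerivAt (fun t : ℝ => (n:ℝ)+t+2) 1 x := by
    simpa using ((hasDerivAt_id x).const_add ((n:ℝ))).add_const 2
  have h1 := (hA.inv hs1.ne').neg
  have h2 := hB.log hs2.ne'
  have h3 := hA.log hs1.ne'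
  have := h1.add (h2.sub h3)
  refine this.congr_deriv ?_
  field_simp
  ring

lemma FF_tendsto (n : ℕ) : Tendsto (FF n) atTop (𝓝 0) := by
  have ha : Tendsto (fun t : ℝ => (n:ℝ)+t+1) atTop atTop := by
    apply tendsto_atTop_add_const_right
    exact tendsto_atTop_add_const_left _ _ tendsto_id
  have h1 : Tendsto (fun t : ℝ => -((n:ℝ)+t+1)⁻¹) atTop (𝓝 0) := by
    simpa using (ha.inv_tendsto_atTop).neg
  have h2 : Tendsto (fun t : ℝ => Real.log ((n:ℝ)+t+2) - Real.log ((n:ℝ)+t+1))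
      atTop (𝓝 0) := by
    have hq : Tendsto (fun t : ℝ => ((n:ℝ)+t+2)/((n:ℝ)+t+1)) atTop (𝓝 1) := by
      have : ∀ᶠ t : ℝ in atTop, ((n:ℝ)+t+2)/((n:ℝ)+t+1) = 1 + ((n:ℝ)+t+1)⁻¹ := by
        filter_upwards [eventually_gt_atTop 0] with t ht
        have : (0:ℝ) < (n:ℝ)+t+1 := by positivity
        field_simp; ring
      rw [tendsto_congr' this]
      simpa using (tendsto_const_nhds (x := (1:ℝ))).add ha.inv_tendsto_atTop
    have hl : Tendsto (fun t : ℝ => Real.log (((n:ℝ)+t+2)/((n:ℝ)+t+1))) atTop (𝓝 0) := by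
      have := (Real.continuousAt_log one_ne_zero).tendsto.comp hq
      simpa [Function.comp_def] using this
    apply hl.congr'
    filter_upwards [eventually_gt_atTop 0] with t ht
    have h1 : (0:ℝ) < (n:ℝ)+t+1 := by positivity
    have h2 : (0:ℝ) < (n:ℝ)+t+2 := by positivity
    rw [Real.log_div h2.ne' h1.ne']
  have := h1.add h2
  rw [add_zero] at this
  exact this

lemma G_nonneg (n : ℕ) (x : ℝ) (hx : x ∈ Ioi (0:ℝ)) :
    0 ≤ (1/((n:ℝ)+x+1) - 1/((n:ℝ)+x+2)) * (1/((n:ℝ)+x+1)) := by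
  have h1 : (0:ℝ) < (n:ℝ)+x+1 := by have := hx.out; positivity
  have h2 : (0:ℝ) < (n:ℝ)+x+2 := by have := hx.out; positivity
  have := one_div_le_one_div_of_le h1 (by linarith : (n:ℝ)+x+1 ≤ (n:ℝ)+x+2)
  apply mul_nonneg (by linarith) (by positivity)

lemma integrableOn_G (n : ℕ) :
    IntegrableOn (fun x : ℝ => (1/((n:ℝ)+x+1) - 1/((n:ℝ)+x+2)) * (1/((n:ℝ)+x+1))) (Ioi 0) :=
  integrableOn_Ioi_deriv_of_nonneg' (FF_hasDeriv n) (G_nonneg n) (FF_tendsto n)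

lemma integral_G (n : ℕ) :
    ∫ x in Ioi (0:ℝ), (1/((n:ℝ)+x+1) - 1/((n:ℝ)+x+2)) * (1/((n:ℝ)+x+1)) = T n := by
  rw [integral_Ioi_of_hasDerivAt_of_nonneg' (FF_hasDeriv n) (G_nonneg n) (FF_tendsto n)]
  unfold FF T
  ring_nf

lemma lint_G (n : ℕ) :
    ∫⁻ x in Ioi (0:ℝ), ENNReal.ofReal ((1/((n:ℝ)+x+1) - 1/((n:ℝ)+x+2)) * (1/((n:ℝ)+x+1))) =
      ENNReal.ofReal (T n) := by
  rw [← ofReal_integral_eq_lintegral_ofReal (integrableOn_G n)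
    ((ae_restrict_iff' measurableSet_Ioi).2 (ae_of_all _ (G_nonneg n))), integral_G n]

lemma lint_Hn (n : ℕ) :
    ∫⁻ p in (Ioo (0:ℝ) 1 ×ˢ Ioo (0:ℝ) 1),
      ENNReal.ofReal ((1 - p.1) * (p.1*p.2)^n / (-Real.log (p.1*p.2))) =
      ENNReal.ofReal (T n) := by
  have hSm : MeasurableSet (Ioo (0:ℝ) 1 ×ˢ Ioo (0:ℝ) 1) :=
    measurableSet_Ioo.prod measurableSet_Ioo
  have e1 : ∫⁻ p in (Ioo (0:ℝ) 1 ×ˢ Ioo (0:ℝ) 1),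
      ENNReal.ofReal ((1 - p.1) * (p.1*p.2)^n / (-Real.log (p.1*p.2))) =
      ∫⁻ p in (Ioo (0:ℝ) 1 ×ˢ Ioo (0:ℝ) 1), ∫⁻ t in Ioi (0:ℝ),
        ENNReal.ofReal ((1 - p.1) * Real.exp (Real.log p.1 * ((n:ℝ)+t))
          * Real.exp (Real.log p.2 * ((n:ℝ)+t))) := by
    apply setLIntegral_congr_fun hSm
    rintro ⟨x, y⟩ ⟨hx, hy⟩
    have hu : x*y ∈ Ioo (0:ℝ) 1 :=
      ⟨mul_pos hx.1 hy.1, lt_of_lt_of_le (mul_lt_mul_of_pos_left hy.2 hx.1) (by linarith [hx.2])⟩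
    have hc : (0:ℝ) ≤ 1 - x := by linarith [hx.2]
    calc ENNReal.ofReal ((1 - x) * (x*y)^n / (-Real.log (x*y)))
        = ENNReal.ofReal ((1 - x) * (x*y)^((n:ℕ):ℝ) / (-Real.log (x*y))) := by
          rw [Real.rpow_natCast]
      _ = ∫⁻ t in Ioi (0:ℝ), ENNReal.ofReal ((1-x) * (x*y) ^ (((n:ℕ):ℝ) + t)) :=
          (lint_t (1-x) hu hc ((n:ℕ):ℝ)).symm
      _ = _ := by
          apply lintegral_congr
          intro t
          rw [Real.mul_rpow hx.1.le hy.1.le, Real.rpow_def_of_pos hx.1,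
            Real.rpow_def_of_pos hy.1, ← mul_assoc]
  rw [e1]
  rw [lintegral_lintegral_swap]
  · have e3 : ∫⁻ t in Ioi (0:ℝ), ∫⁻ p in (Ioo (0:ℝ) 1 ×ˢ Ioo (0:ℝ) 1),
        ENNReal.ofReal ((1 - p.1) * Real.exp (Real.log p.1 * ((n:ℝ)+t))
          * Real.exp (Real.log p.2 * ((n:ℝ)+t))) =
        ∫⁻ t in Ioi (0:ℝ), ENNReal.ofReal
          ((1/((n:ℝ)+t+1) - 1/((n:ℝ)+t+2)) * (1/((n:ℝ)+t+1))) := by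
      apply setLIntegral_congr_fun measurableSet_Ioi
      intro t ht
      beta_reduce
      have hs : (0:ℝ) ≤ (n:ℝ) + t := by have := le_of_lt ht.out; positivity
      have inner1 : ∫⁻ p in (Ioo (0:ℝ) 1 ×ˢ Ioo (0:ℝ) 1),
          ENNReal.ofReal ((1 - p.1) * Real.exp (Real.log p.1 * ((n:ℝ)+t))
            * Real.exp (Real.log p.2 * ((n:ℝ)+t))) =
          ∫⁻ p in (Ioo (0:ℝ) 1 ×ˢ Ioo (0:ℝ) 1),
            ENNReal.ofReal ((1 - p.1) * p.1 ^ ((n:ℝ)+t)) * ENNReal.ofReal (p.2 ^ ((n:ℝ)+t)) := by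
        apply setLIntegral_congr_fun hSm
        rintro ⟨x, y⟩ ⟨hx, hy⟩
        beta_reduce
        rw [← Real.rpow_def_of_pos hx.1, ← Real.rpow_def_of_pos hy.1,
          ← ENNReal.ofReal_mul (mul_nonneg (by linarith [hx.2]) (Real.rpow_nonneg hx.1.le _))]
      rw [inner1]
      have hprod : (volume : Measure (ℝ×ℝ)).restrict (Ioo (0:ℝ) 1 ×ˢ Ioo (0:ℝ) 1) =
          (volume.restrict (Ioo (0:ℝ) 1)).prod (volume.restrict (Ioo (0:ℝ) 1)) := by
        rw [Measure.prod_restrict, Measure.volume_eq_prod]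
      have hm : Measurable (fun x : ℝ => x ^ ((n:ℝ)+t)) := by fun_prop
      rw [hprod]
      rw [lintegral_prod_mul (f := fun x => ENNReal.ofReal ((1-x) * x ^ ((n:ℝ)+t)))
        (g := fun y => ENNReal.ofReal (y ^ ((n:ℝ)+t)))
        ((((measurable_const.sub measurable_id).mul hm).ennreal_ofReal).aemeasurable)
        ((hm.ennreal_ofReal).aemeasurable)]
      rw [lint_sub_pow _ hs, lint_pow _ hs,
        ← ENNReal.ofReal_mul (by
          have h1 : (0:ℝ) < (n:ℝ)+t+1 := by linarith
          have h2 : (0:ℝ) < (n:ℝ)+t+2 := by linarith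
          have := one_div_le_one_div_of_le h1 (by linarith : (n:ℝ)+t+1 ≤ (n:ℝ)+t+2)
          linarith)]
    rw [e3, lint_G n]
  · apply Measurable.aemeasurable
    apply Measurable.ennreal_ofReal
    exact ((measurable_const.sub measurable_fst.fst).mul
        ((Real.measurable_log.comp measurable_fst.fst).mul
          (measurable_const.add measurable_snd)).exp).mul
      ((Real.measurable_log.comp measurable_fst.snd).mul
        (measurable_const.add measurable_snd)).exp

end Stmt5Aux

open Stmt5Aux


/-- ∬_{[0,1]²} (1−x)/((1−xy)·ln(xy)) dx dy converges and equals −γ. -/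
theorem stmt_5 :
    IntegrableOn (fun p : ℝ × ℝ => (1 - p.1) / ((1 - p.1 * p.2) * Real.log (p.1 * p.2)))
        (Set.Ioo 0 1 ×ˢ Set.Ioo 0 1) ∧
      ∫ p in (Set.Ioo (0:ℝ) 1 ×ˢ Set.Ioo (0:ℝ) 1),
          (1 - p.1) / ((1 - p.1 * p.2) * Real.log (p.1 * p.2)) =
        -Real.eulerMascheroniConstant := by
  set g : ℝ × ℝ → ℝ :=
    fun p => (1 - p.1) / ((1 - p.1 * p.2) * (-Real.log (p.1 * p.2))) with hg
  have hSm : MeasurableSet (Ioo (0:ℝ) 1 ×ˢ Ioo (0:ℝ) 1) :=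
    measurableSet_Ioo.prod measurableSet_Ioo
  -- basic facts on the square
  have hfacts : ∀ p : ℝ × ℝ, p ∈ (Ioo (0:ℝ) 1 ×ˢ Ioo (0:ℝ) 1) →
      p.1 * p.2 ∈ Ioo (0:ℝ) 1 ∧ Real.log (p.1 * p.2) < 0 ∧ (0:ℝ) ≤ 1 - p.1 := by
    rintro ⟨x, y⟩ ⟨hx, hy⟩
    have hu : x*y ∈ Ioo (0:ℝ) 1 :=
      ⟨mul_pos hx.1 hy.1, lt_of_lt_of_le (mul_lt_mul_of_pos_left hy.2 hx.1) (by linarith [hx.2])⟩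
    exact ⟨hu, Real.log_neg hu.1 hu.2, by linarith [hx.2]⟩
  have hg_nonneg : ∀ p ∈ (Ioo (0:ℝ) 1 ×ˢ Ioo (0:ℝ) 1), 0 ≤ g p := by
    intro p hp
    obtain ⟨hu, hlu, hc⟩ := hfacts p hp
    exact div_nonneg hc (mul_nonneg (by linarith [hu.2] : (0:ℝ) ≤ 1 - p.1*p.2)
      (by linarith : (0:ℝ) ≤ -Real.log (p.1*p.2)))
  have hgf : ∀ p ∈ (Ioo (0:ℝ) 1 ×ˢ Ioo (0:ℝ) 1),
      (1 - p.1) / ((1 - p.1 * p.2) * Real.log (p.1 * p.2)) = -(g p) := by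
    intro p hp
    show _ = -((1 - p.1) / ((1 - p.1 * p.2) * (-Real.log (p.1 * p.2))))
    rw [mul_neg, div_neg, neg_neg]
  -- the key lintegral computation
  have key : ∫⁻ p in (Ioo (0:ℝ) 1 ×ˢ Ioo (0:ℝ) 1), ENNReal.ofReal (g p) =
      ENNReal.ofReal Real.eulerMascheroniConstant := by
    have e1 : ∫⁻ p in (Ioo (0:ℝ) 1 ×ˢ Ioo (0:ℝ) 1), ENNReal.ofReal (g p) =
        ∫⁻ p in (Ioo (0:ℝ) 1 ×ˢ Ioo (0:ℝ) 1),
          ∑' n : ℕ, ENNReal.ofReal ((1 - p.1) * (p.1*p.2)^n / (-Real.log (p.1*p.2))) := by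
      apply setLIntegral_congr_fun hSm
      rintro ⟨x, y⟩ hp
      obtain ⟨hu, hlu, hc⟩ := hfacts _ hp
      have hsum : Summable (fun n : ℕ => ((1-x)/(-Real.log (x*y))) * (x*y)^n) :=
        (summable_geometric_of_lt_one hu.1.le hu.2).mul_left _
      have hrw : ∀ n : ℕ, (1 - x) * (x*y)^n / (-Real.log (x*y)) =
          ((1-x)/(-Real.log (x*y))) * (x*y)^n := by intro n; ring
      simp_rw [hrw]
      rw [← ENNReal.ofReal_tsum_of_nonneg
        (fun n => mul_nonneg (div_nonneg hc (by linarith)) (pow_nonneg hu.1.le n)) hsum]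
      congr 1
      rw [tsum_mul_left, tsum_geometric_of_lt_one hu.1.le hu.2]
      rw [hg]
      have h1 : (0:ℝ) < 1 - x*y := by linarith [hu.2]
      have h2 : (0:ℝ) < -Real.log (x*y) := by linarith
      field_simp
    rw [e1, lintegral_tsum]
    · have : ∀ n : ℕ, ∫⁻ p in (Ioo (0:ℝ) 1 ×ˢ Ioo (0:ℝ) 1),
          ENNReal.ofReal ((1 - p.1) * (p.1*p.2)^n / (-Real.log (p.1*p.2))) =
          ENNReal.ofReal (T n) := lint_Hn
      simp_rw [this]
      rw [← ENNReal.ofReal_tsum_of_nonneg T_nonneg hasSum_T.summable, hasSum_T.tsum_eq]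
    · intro n
      apply Measurable.aemeasurable
      apply Measurable.ennreal_ofReal
      exact ((measurable_const.sub measurable_fst).mul
        ((measurable_fst.mul measurable_snd).pow_const n)).div
        (Real.measurable_log.comp (measurable_fst.mul measurable_snd)).neg
  -- measurability
  have hgm : Measurable g := by
    apply (measurable_const.sub measurable_fst).div
    exact (measurable_const.sub (measurable_fst.mul measurable_snd)).mul
      (Real.measurable_log.comp (measurable_fst.mul measurable_snd)).neg
  have hg_nonneg_ae : 0 ≤ᵐ[volume.restrict (Ioo (0:ℝ) 1 ×ˢ Ioo (0:ℝ) 1)] g :=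
    (ae_restrict_iff' hSm).2 (ae_of_all _ hg_nonneg)
  have hg_int : IntegrableOn g (Ioo (0:ℝ) 1 ×ˢ Ioo (0:ℝ) 1) := by
    refine ⟨hgm.aestronglyMeasurable.restrict, ?_⟩
    rw [hasFiniteIntegral_iff_ofReal hg_nonneg_ae, key]
    exact ENNReal.ofReal_lt_top
  have hfg_ae : (fun p : ℝ × ℝ => (1 - p.1) / ((1 - p.1 * p.2) * Real.log (p.1 * p.2)))
      =ᵐ[volume.restrict (Ioo (0:ℝ) 1 ×ˢ Ioo (0:ℝ) 1)] (fun p => -(g p)) := by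
    rw [EventuallyEq, ae_restrict_iff' hSm]
    exact ae_of_all _ hgf
  constructor
  · exact (hg_int.neg).congr hfg_ae.symm
  · rw [integral_congr_ae hfg_ae, integral_neg, neg_inj]
    rw [integral_eq_lintegral_of_nonneg_ae hg_nonneg_ae hgm.aestronglyMeasurable.restrict, key,
      ENNReal.toReal_ofReal]
    linarith [Real.one_half_lt_eulerMascheroniConstant]
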